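/- Consider minimizing Σᵢ gᵢ·exp(−Lᵢ·β·uᵢ) over the simplex {u ≥ 0, Σuᵢ = 1} with gᵢ, Lᵢ, β > 0, and define αᵢ = 1/(Lᵢ gᵢ β). The unique minimizer u* has the waterfilling form: there exists ν > 0 such that uᵢ* = (1/(Lᵢβ))·(log(1/ν) − log αᵢ) if 1/ν > αᵢ, and uᵢ* = 0 if 1/ν ≤ αᵢ. -/

import Mathlib

open Finset

lemma deriv_nonneg_of_right_min {f : ℝ → ℝ} {d c : ℝ} (hf : HasDerivAt f d 0)
    (hc : 0 < c) (h : ∀ ε ∈ Set.Ioc (0:ℝ) c, f 0 ≤ f ε) : 0 ≤ d := by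
  have h1 : HasDerivWithinAt f d (Set.Ioi 0) 0 := hf.hasDerivWithinAt
  rw [hasDerivWithinAt_iff_tendsto_slope] at h1
  have hset : Set.Ioi (0:ℝ) \ {0} = Set.Ioi 0 := by
    ext x; simp (config := {contextual := true}) [le_of_lt]
  rw [hset] at h1
  refine ge_of_tendsto h1 ?_
  filter_upwards [Ioc_mem_nhdsGT_of_mem ⟨le_refl (0:ℝ), hc⟩] with x hx
  have hx0 : 0 < x := hx.1
  have := h x hx
  rw [slope_def_field]
  have : (f x - f 0) / (x - 0) ≥ 0 := by
    apply div_nonneg (by linarith) (by linarith)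
  simpa [div_eq_mul_inv] using this

theorem stmt_6 (M : ℕ) (hM : 1 ≤ M) (g L : Fin M → ℝ) (β : ℝ)
    (hg : ∀ i, 0 < g i) (hL : ∀ i, 0 < L i) (hβ : 0 < β)
    (α : Fin M → ℝ) (hα : ∀ i, α i = 1 / (L i * g i * β))
    (u : Fin M → ℝ)
    (hu : u ∈ {u : Fin M → ℝ | (∀ i, 0 ≤ u i) ∧ ∑ i, u i = 1})
    (hmin : IsMinOn (fun v => ∑ i, g i * Real.exp (-(L i * β * v i)))
      {u : Fin M → ℝ | (∀ i, 0 ≤ u i) ∧ ∑ i, u i = 1} u) :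
    ∃ ν : ℝ, 0 < ν ∧ ∀ i,
      (α i < 1 / ν → u i = 1 / (L i * β) * (Real.log (1 / ν) - Real.log (α i))) ∧
      (1 / ν ≤ α i → u i = 0) := by
  obtain ⟨hu0, hu1⟩ := hu
  set f : Fin M → ℝ := fun i => L i * g i * β * Real.exp (-(L i * β * u i)) with hfdef
  have hfpos : ∀ i, 0 < f i := fun i => by
    have h1 := hL i; have h2 := hg i
    have h3 := Real.exp_pos (-(L i * β * u i))
    simp only [hfdef]; positivity
  -- key exchange inequality
  have key : ∀ i k, 0 < u i → f k ≤ f i := by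
    intro i k hui
    by_cases hik : k = i
    · subst hik; exact le_refl _
    set c : Fin M → ℝ := fun j => (if j = k then 1 else 0) - (if j = i then 1 else 0) with hc
    set w : ℝ → Fin M → ℝ := fun ε j => u j + ε * c j with hw
    set φ : ℝ → ℝ := fun ε => ∑ j, g j * Real.exp (-(L j * β * w ε j)) with hφ
    have hderiv : HasDerivAt φ (∑ j, g j * (Real.exp (-(L j * β * w 0 j)) * (-(L j * β * c j)))) 0 := by
      apply HasDerivAt.fun_sum
      intro j _
      have h1 : HasDerivAt (fun ε : ℝ => u j + ε * c j) (c j) 0 := by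
        simpa using ((hasDerivAt_id (0:ℝ)).mul_const (c j)).const_add (u j)
      have h2 : HasDerivAt (fun ε : ℝ => -(L j * β * (u j + ε * c j))) (-(L j * β * c j)) 0 := by
        simpa [mul_comm] using ((h1.const_mul (L j * β)).fun_neg)
      simpa [hw, mul_comm] using (h2.exp.const_mul (g j))
    have hdval : (∑ j, g j * (Real.exp (-(L j * β * w 0 j)) * (-(L j * β * c j)))) = f i - f k := by
      have : ∀ j, g j * (Real.exp (-(L j * β * w 0 j)) * (-(L j * β * c j)))
          = (if j = i then f i else 0) + (if j = k then -(f k) else 0) := by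
        intro j
        by_cases hji : j = i
        · subst hji; simp [hw, hc, hik, Ne.symm hik, hfdef]; ring
        · by_cases hjk : j = k
          · subst hjk; simp [hw, hc, hji, hfdef]; ring
          · simp [hw, hc, hji, hjk]
      rw [Finset.sum_congr rfl (fun j _ => this j), Finset.sum_add_distrib,
        Finset.sum_ite_eq' univ i (fun _ => f i), Finset.sum_ite_eq' univ k (fun _ => -(f k))]
      simp [sub_eq_add_neg]
    rw [hdval] at hderiv
    have hmono : ∀ ε ∈ Set.Ioc (0:ℝ) (u i), φ 0 ≤ φ ε := by
      intro ε hε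
      have hmem : w ε ∈ {u : Fin M → ℝ | (∀ i, 0 ≤ u i) ∧ ∑ i, u i = 1} := by
        constructor
        · intro j
          have hik' : i ≠ k := fun h => hik h.symm
          by_cases hji : j = i
          · subst hji
            have hwv : w ε j = u j - ε := by simp [hw, hc, hik']; ring
            rw [hwv]; linarith [hε.2]
          · by_cases hjk : j = k
            · subst hjk
              have hwv : w ε j = u j + ε := by simp [hw, hc, hji]
              rw [hwv]; linarith [hu0 j, hε.1]
            · have hwv : w ε j = u j := by simp [hw, hc, hji, hjk]
              rw [hwv]; exact hu0 j
        · simp only [hw, hc]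
          rw [Finset.sum_add_distrib, ← Finset.mul_sum, Finset.sum_sub_distrib,
            Finset.sum_ite_eq' univ k (fun _ => (1:ℝ)), Finset.sum_ite_eq' univ i (fun _ => (1:ℝ))]
          simp [hu1]
      have h0 : w 0 = u := by funext j; simp [hw]
      have := isMinOn_iff.mp hmin (w ε) hmem
      simpa [hφ, h0] using this
    have := deriv_nonneg_of_right_min hderiv hui hmono
    linarith
  -- find a positive coordinate
  have hex : ∃ j, 0 < u j := by
    by_contra hcon
    push_neg at hcon
    have : ∀ j, u j = 0 := fun j => le_antisymm (hcon j) (hu0 j)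
    rw [Finset.sum_congr rfl (fun j _ => this j)] at hu1
    simp at hu1
  obtain ⟨j₀, hj₀⟩ := hex
  refine ⟨f j₀, hfpos j₀, ?_⟩
  set ν := f j₀ with hν
  have hνle : ∀ k, f k ≤ ν := fun k => key j₀ k hj₀
  have hνpos : 0 < ν := hfpos j₀
  have hαpos : ∀ i, 0 < α i := fun i => by
    have h1 := hL i; have h2 := hg i
    rw [hα]; positivity
  intro i
  constructor
  · -- case α i < 1/ν : u i > 0
    intro h
    have hLgβpos : 0 < L i * g i * β := by
      have := hL i; have := hg i; positivity
    have hLβpos : 0 < L i * β := by have := hL i; positivity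
    have hui : 0 < u i := by
      rcases lt_or_eq_of_le (hu0 i) with h' | h'
      · exact h'
      · exfalso
        have hf0 : f i = L i * g i * β := by simp [hfdef, ← h']
        have h1 : 1 / α i ≤ ν := by
          rw [hα, one_div_one_div, ← hf0]; exact hνle i
        have h2 : 1 / ν ≤ α i := by
          rw [div_le_iff₀ hνpos]
          rw [div_le_iff₀ (hαpos i)] at h1 <;> nlinarith
        linarith
    have hfi : f i = ν := le_antisymm (hνle i) (key i j₀ hui)
    have hfi' : L i * g i * β * Real.exp (-(L i * β * u i)) = ν := by
      simpa [hfdef] using hfi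
    have he : Real.exp (-(L i * β * u i)) = ν * α i := by
      rw [hα, ← hfi', mul_one_div, mul_div_cancel_left₀ _ (ne_of_gt hLgβpos)]
    have hlog := congrArg Real.log he
    rw [Real.log_exp, Real.log_mul (ne_of_gt hνpos) (ne_of_gt (hαpos i))] at hlog
    have hlog1 : Real.log (1 / ν) = -Real.log ν := by
      rw [one_div, Real.log_inv]
    have h3 : u i * (L i * β) = -(Real.log ν) - Real.log (α i) := by
      linear_combination -hlog
    rw [hlog1]
    rw [show -Real.log ν - Real.log (α i) = u i * (L i * β) by linarith]
    field_simp
    rw [div_self (ne_of_gt (hL i))]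
  · -- case 1/ν ≤ α i : u i = 0
    intro h
    by_contra hne
    have hLgβpos : 0 < L i * g i * β := by
      have := hL i; have := hg i; positivity
    have hui : 0 < u i := lt_of_le_of_ne (hu0 i) (Ne.symm hne)
    have hfi : f i = ν := le_antisymm (hνle i) (key i j₀ hui)
    have hfi' : L i * g i * β * Real.exp (-(L i * β * u i)) = ν := by
      simpa [hfdef] using hfi
    have hexp : Real.exp (-(L i * β * u i)) < 1 := by
      rw [Real.exp_lt_one_iff]
      have : 0 < L i * β * u i := by have := hL i; positivity
      linarith
    have hlt : ν < L i * g i * β := by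
      rw [← hfi']
      nlinarith [hexp, hLgβpos]
    have hcon : α i < 1 / ν := by
      rw [hα, div_lt_div_iff₀ hLgβpos hνpos]; linarith
    linarith
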